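/- Let N ≥ 7 be an integer, α_N := (N(N-2))^{(N-2)/4}, and for δ > 0 let U_δ : ℝ^N → ℝ be U_δ(x) := α_N · δ^{(N-2)/2} / (δ² + |x|²)^{(N-2)/2}. Let Ω ⊆ ℝ^N be a bounded open set containing 0. Then there exist constants C > 0 and δ₀ > 0 such that for all δ ∈ (0, δ₀) one has | ∫_Ω U_δ(x)² dx - α_N² · δ² · ∫_{ℝ^N} (1+|y|²)^{-(N-2)} dy | ≤ C · δ^{N-2}, where the integral ∫_{ℝ^N} (1+|y|²)^{-(N-2)} dy is finite since N > 4. -/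

import Mathlib

open MeasureTheory
open scoped Pointwise

/-- The standard bubble `U_δ(x) = α_N δ^((N-2)/2) / (δ² + |x|²)^((N-2)/2)`,
with `α_N = (N(N-2))^((N-2)/4)`. -/
noncomputable def bubble (N : ℕ) (δ : ℝ) (x : EuclideanSpace ℝ (Fin N)) : ℝ :=
  ((N : ℝ) * ((N : ℝ) - 2)) ^ (((N : ℝ) - 2) / 4) * δ ^ (((N : ℝ) - 2) / 2) /
    (δ ^ 2 + ‖x‖ ^ 2) ^ (((N : ℝ) - 2) / 2)

lemma bubble_sq_eq (N : ℕ) {δ : ℝ} (hδ : 0 < δ) (x : EuclideanSpace ℝ (Fin N)) :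
    bubble N δ x ^ 2 =
      (((N : ℝ) * ((N : ℝ) - 2)) ^ (((N : ℝ) - 2) / 4)) ^ 2 * δ ^ ((N:ℝ) - 2) *
        (δ ^ 2 + ‖x‖ ^ 2) ^ (-((N:ℝ) - 2)) := by
  have hbase : (0:ℝ) < δ ^ 2 + ‖x‖ ^ 2 := by positivity
  unfold bubble
  rw [div_pow, mul_pow]
  rw [← Real.rpow_natCast (δ ^ (((N:ℝ)-2)/2)) 2, ← Real.rpow_mul hδ.le]
  rw [← Real.rpow_natCast ((δ ^ 2 + ‖x‖ ^ 2) ^ (((N:ℝ)-2)/2)) 2, ← Real.rpow_mul hbase.le]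
  rw [Real.rpow_neg hbase.le, div_eq_mul_inv]
  norm_num

lemma bubble_sq_smul (N : ℕ) {δ : ℝ} (hδ : 0 < δ) (y : EuclideanSpace ℝ (Fin N)) :
    bubble N δ (δ • y) ^ 2 =
      (((N : ℝ) * ((N : ℝ) - 2)) ^ (((N : ℝ) - 2) / 4)) ^ 2 * δ ^ (-((N:ℝ) - 2)) *
        (1 + ‖y‖ ^ 2) ^ (-((N:ℝ) - 2)) := by
  rw [bubble_sq_eq N hδ]
  have h1 : ‖δ • y‖ = δ * ‖y‖ := by
    rw [norm_smul, Real.norm_eq_abs, abs_of_pos hδ]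
  have h2 : δ^2 + ‖δ • y‖^2 = δ^2 * (1 + ‖y‖^2) := by rw [h1]; ring
  have hy : (0:ℝ) < 1 + ‖y‖^2 := by positivity
  rw [h2, Real.mul_rpow (by positivity) hy.le]
  rw [← Real.rpow_natCast δ 2, ← Real.rpow_mul hδ.le]
  have key : δ ^ ((N:ℝ)-2) * δ ^ ((2:ℕ) * -((N:ℝ)-2) : ℝ) = δ ^ (-((N:ℝ)-2)) := by
    rw [← Real.rpow_add hδ]; norm_num; ring_nf
  calc (((N : ℝ) * ((N : ℝ) - 2)) ^ (((N : ℝ) - 2) / 4)) ^ 2 * δ ^ ((N:ℝ) - 2) *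
      (δ ^ ((2:ℕ) * -((N:ℝ)-2) : ℝ) * (1 + ‖y‖ ^ 2) ^ (-((N:ℝ) - 2)))
      = (((N : ℝ) * ((N : ℝ) - 2)) ^ (((N : ℝ) - 2) / 4)) ^ 2 *
        (δ ^ ((N:ℝ)-2) * δ ^ ((2:ℕ) * -((N:ℝ)-2) : ℝ)) * (1 + ‖y‖ ^ 2) ^ (-((N:ℝ) - 2)) := by
        ring
    _ = _ := by rw [key]

set_option maxHeartbeats 1600000 in
/-- The expansion (4.19) in the proof of Lemma 4.6 of the paper: for `N ≥ 7` and
`Ω ⊆ ℝ^N` a bounded open set containing `0`, there are `C > 0` and `δ₀ > 0` such that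
for `0 < δ < δ₀`,
`|∫_Ω U_δ² - α_N² δ² ∫_{ℝ^N} (1+|y|²)^(-(N-2))| ≤ C δ^(N-2)`, the integral
`∫_{ℝ^N} (1+|y|²)^(-(N-2))` being finite since `N > 4`. -/
theorem stmt_14 (N : ℕ) (hN : 7 ≤ N) (Ω : Set (EuclideanSpace ℝ (Fin N)))
    (hopen : IsOpen Ω) (hbdd : Bornology.IsBounded Ω) (h0 : 0 ∈ Ω) :
    Integrable (fun y : EuclideanSpace ℝ (Fin N) =>
        (1 + ‖y‖ ^ 2) ^ (-((N : ℝ) - 2))) ∧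
    ∃ C : ℝ, 0 < C ∧ ∃ δ₀ : ℝ, 0 < δ₀ ∧ ∀ δ : ℝ, 0 < δ → δ < δ₀ →
      |(∫ x in Ω, (bubble N δ x) ^ 2) -
          (((N : ℝ) * ((N : ℝ) - 2)) ^ (((N : ℝ) - 2) / 4)) ^ 2 * δ ^ 2 *
            ∫ y : EuclideanSpace ℝ (Fin N), (1 + ‖y‖ ^ 2) ^ (-((N : ℝ) - 2))| ≤
        C * δ ^ ((N : ℝ) - 2) := by
  have hN7 : (7:ℝ) ≤ (N:ℝ) := by exact_mod_cast hN
  set f : EuclideanSpace ℝ (Fin N) → ℝ := fun y => (1 + ‖y‖ ^ 2) ^ (-((N : ℝ) - 2)) with hf_def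
  have hf_nonneg : ∀ y, 0 ≤ f y := fun y => Real.rpow_nonneg (by positivity) _
  have hdim : Module.finrank ℝ (EuclideanSpace ℝ (Fin N)) = N := finrank_euclideanSpace_fin
  have hint : Integrable f := by
    have h := integrable_rpow_neg_one_add_norm_sq (E := EuclideanSpace ℝ (Fin N)) (μ := volume)
      (r := 2*((N:ℝ)-2)) (by rw [hdim]; linarith)
    have : f = fun x : EuclideanSpace ℝ (Fin N) => ((1:ℝ) + ‖x‖ ^ 2) ^ (-(2*((N:ℝ)-2)) / 2) := by
      funext y; show (1 + ‖y‖ ^ 2) ^ (-((N : ℝ) - 2)) = _; congr 1; ring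
    rw [this]; exact h
  refine ⟨hint, ?_⟩
  set A2 : ℝ := (((N : ℝ) * ((N : ℝ) - 2)) ^ (((N : ℝ) - 2) / 4)) ^ 2 with hA2def
  have hA2 : 0 ≤ A2 := sq_nonneg _
  set I : ℝ := ∫ y, f y with hIdef
  have hI0 : 0 ≤ I := integral_nonneg hf_nonneg
  obtain ⟨r, hr, hball⟩ := Metric.isOpen_iff.mp hopen 0 h0
  set K : ℝ := A2 * 2 ^ ((N:ℝ)-2) * r ^ (-((N:ℝ)-4)) * I with hKdef
  have hK0 : 0 ≤ K := by
    apply mul_nonneg _ hI0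
    apply mul_nonneg (mul_nonneg hA2 (Real.rpow_nonneg (by norm_num) _))
      (Real.rpow_nonneg hr.le _)
  refine ⟨1 + K, by linarith, r, hr, ?_⟩
  intro δ hδ hδr
  set s : Set (EuclideanSpace ℝ (Fin N)) := δ⁻¹ • Ω with hsdef
  set R : ℝ := r / δ with hRdef
  have hRpos : 0 < R := div_pos hr hδ
  have hR1 : 1 < R := (one_lt_div hδ).2 hδr
  have hs_open : IsOpen s := hopen.smul₀ (inv_ne_zero hδ.ne')
  have hΩeq : δ • s = Ω := smul_inv_smul₀ hδ.ne' Ω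
  have hball_sub : Metric.ball (0 : EuclideanSpace ℝ (Fin N)) R ⊆ s := by
    intro y hy
    rw [hsdef, Set.mem_inv_smul_set_iff₀ hδ.ne']
    apply hball
    rw [mem_ball_zero_iff] at hy ⊢
    rw [norm_smul, Real.norm_eq_abs, abs_of_pos hδ]
    calc δ * ‖y‖ < δ * R := by exact mul_lt_mul_of_pos_left hy hδ
      _ = r := by rw [hRdef]; field_simp [hδ.ne']
  -- change of variables on Ω
  have hcs := Measure.setIntegral_comp_smul_of_pos (volume) (fun x => bubble N δ x ^ 2) s hδ
  rw [hdim, hΩeq, smul_eq_mul] at hcs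
  have hδN : (0:ℝ) < δ ^ N := pow_pos hδ N
  have E1 : ∫ x in Ω, bubble N δ x ^ 2 = δ ^ N * ∫ y in s, bubble N δ (δ • y) ^ 2 := by
    rw [hcs]; field_simp
  have E2 : ∫ y in s, bubble N δ (δ • y) ^ 2 = A2 * δ ^ (-((N:ℝ)-2)) * ∫ y in s, f y := by
    simp only [bubble_sq_smul N hδ, ← hA2def, mul_assoc]
    rw [integral_const_mul, integral_const_mul]
  have hpow1 : (δ:ℝ) ^ N * δ ^ (-((N:ℝ)-2)) = δ ^ 2 := by
    rw [← Real.rpow_natCast δ N, ← Real.rpow_natCast δ 2, ← Real.rpow_add hδ]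
    congr 1; ring
  have E3 : ∫ x in Ω, bubble N δ x ^ 2 = A2 * δ ^ 2 * ∫ y in s, f y := by
    rw [E1, E2, show (δ:ℝ) ^ N * (A2 * δ ^ (-((N:ℝ)-2)) * ∫ y in s, f y)
      = A2 * ((δ:ℝ) ^ N * δ ^ (-((N:ℝ)-2))) * ∫ y in s, f y from by ring, hpow1]
  set J : ℝ := ∫ y in sᶜ, f y with hJdef
  have hJ0 : 0 ≤ J := integral_nonneg fun y => hf_nonneg y
  have hsplit : (∫ y in s, f y) + J = I := integral_add_compl hs_open.measurableSet hint
  -- tail bound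
  have hsub2 : sᶜ ⊆ (Metric.ball (0 : EuclideanSpace ℝ (Fin N)) R)ᶜ := Set.compl_subset_compl.mpr hball_sub
  have T1 : J ≤ ∫ y in (Metric.ball (0 : EuclideanSpace ℝ (Fin N)) R)ᶜ, f y :=
    setIntegral_mono_set hint.integrableOn
      (Filter.Eventually.of_forall hf_nonneg) (HasSubset.Subset.eventuallyLE hsub2)
  have hcompl_eq : R • (Metric.ball (0 : EuclideanSpace ℝ (Fin N)) 1)ᶜ = (Metric.ball (0 : EuclideanSpace ℝ (Fin N)) R)ᶜ := by
    ext x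
    rw [Set.mem_smul_set_iff_inv_smul_mem₀ hRpos.ne']
    simp only [Set.mem_compl_iff, mem_ball_zero_iff, norm_smul, Real.norm_eq_abs,
      abs_of_pos (inv_pos.2 hRpos), not_lt]
    rw [le_inv_mul_iff₀ hRpos, mul_one]
  have hcs2 := Measure.setIntegral_comp_smul_of_pos (volume) f (Metric.ball (0 : EuclideanSpace ℝ (Fin N)) 1)ᶜ hRpos
  rw [hdim, hcompl_eq, smul_eq_mul] at hcs2
  have hRN : (0:ℝ) < R ^ N := pow_pos hRpos N
  have T2 : ∫ y in (Metric.ball (0 : EuclideanSpace ℝ (Fin N)) R)ᶜ, f y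
      = R ^ N * ∫ z in (Metric.ball (0 : EuclideanSpace ℝ (Fin N)) 1)ᶜ, f (R • z) := by
    rw [hcs2]; field_simp
  have T3 : ∀ z ∈ (Metric.ball (0 : EuclideanSpace ℝ (Fin N)) 1)ᶜ,
      f (R • z) ≤ 2 ^ ((N:ℝ)-2) * R ^ (-(2*((N:ℝ)-2))) * f z := by
    intro z hz
    rw [Set.mem_compl_iff, mem_ball_zero_iff, not_lt] at hz
    have hz2 : (0:ℝ) < 1 + ‖z‖ ^ 2 := by positivity
    have hfz : f (R • z) = (1 + R ^ 2 * ‖z‖ ^ 2) ^ (-((N:ℝ)-2)) := by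
      simp only [hf_def, norm_smul, Real.norm_eq_abs, abs_of_pos hRpos, mul_pow]
    have hz1 : (1:ℝ) ≤ ‖z‖ ^ 2 := by nlinarith [norm_nonneg z]
    have hle : R ^ 2 / 2 * (1 + ‖z‖ ^ 2) ≤ 1 + R ^ 2 * ‖z‖ ^ 2 := by
      have h2 : R ^ 2 * 1 ≤ R ^ 2 * ‖z‖ ^ 2 :=
        mul_le_mul_of_nonneg_left hz1 (sq_nonneg R)
      nlinarith
    have hpos : (0:ℝ) < R ^ 2 / 2 * (1 + ‖z‖ ^ 2) := by positivity
    have hmono : (1 + R ^ 2 * ‖z‖ ^ 2) ^ (-((N:ℝ)-2))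
        ≤ (R ^ 2 / 2 * (1 + ‖z‖ ^ 2)) ^ (-((N:ℝ)-2)) :=
      Real.rpow_le_rpow_of_nonpos hpos hle (by linarith)
    have hsplitpow : (R ^ 2 / 2 * (1 + ‖z‖ ^ 2)) ^ (-((N:ℝ)-2))
        = 2 ^ ((N:ℝ)-2) * R ^ (-(2*((N:ℝ)-2))) * f z := by
      have e1 : ((2:ℕ):ℝ) * -((N:ℝ)-2) = -(2*((N:ℝ)-2)) := by push_cast; ring
      rw [Real.mul_rpow (by positivity) hz2.le,
        Real.div_rpow (by positivity) (by norm_num : (0:ℝ) ≤ 2),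
        ← Real.rpow_natCast R 2, ← Real.rpow_mul hRpos.le, e1,
        Real.rpow_neg (by norm_num : (0:ℝ) ≤ 2) ((N:ℝ)-2), div_eq_mul_inv, inv_inv]
      simp only [hf_def]
      ring
    rw [hfz]
    exact hmono.trans hsplitpow.le
  have hu_meas : MeasurableSet ((Metric.ball (0 : EuclideanSpace ℝ (Fin N)) 1)ᶜ) :=
    Metric.isOpen_ball.measurableSet.compl
  have hint_comp : IntegrableOn (fun z => f (R • z)) (Metric.ball (0 : EuclideanSpace ℝ (Fin N)) 1)ᶜ :=
    (hint.comp_smul hRpos.ne').integrableOn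
  have T4 : ∫ z in (Metric.ball (0 : EuclideanSpace ℝ (Fin N)) 1)ᶜ, f (R • z)
      ≤ 2 ^ ((N:ℝ)-2) * R ^ (-(2*((N:ℝ)-2))) * I := by
    have step1 : ∫ z in (Metric.ball (0 : EuclideanSpace ℝ (Fin N)) 1)ᶜ, f (R • z)
        ≤ ∫ z in (Metric.ball (0 : EuclideanSpace ℝ (Fin N)) 1)ᶜ, 2 ^ ((N:ℝ)-2) * R ^ (-(2*((N:ℝ)-2))) * f z := by
      apply setIntegral_mono_on hint_comp (hint.integrableOn.const_mul _) hu_meas T3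
    have step2 : ∫ z in (Metric.ball (0 : EuclideanSpace ℝ (Fin N)) 1)ᶜ, 2 ^ ((N:ℝ)-2) * R ^ (-(2*((N:ℝ)-2))) * f z
        = 2 ^ ((N:ℝ)-2) * R ^ (-(2*((N:ℝ)-2))) * ∫ z in (Metric.ball (0 : EuclideanSpace ℝ (Fin N)) 1)ᶜ, f z := by
      rw [integral_const_mul]
    have step3 : ∫ z in (Metric.ball (0 : EuclideanSpace ℝ (Fin N)) 1)ᶜ, f z ≤ I :=
      setIntegral_le_integral hint (Filter.Eventually.of_forall hf_nonneg)
    have hcnn : (0:ℝ) ≤ 2 ^ ((N:ℝ)-2) * R ^ (-(2*((N:ℝ)-2))) := by positivity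
    calc ∫ z in (Metric.ball (0 : EuclideanSpace ℝ (Fin N)) 1)ᶜ, f (R • z)
        ≤ 2 ^ ((N:ℝ)-2) * R ^ (-(2*((N:ℝ)-2))) * ∫ z in (Metric.ball (0 : EuclideanSpace ℝ (Fin N)) 1)ᶜ, f z := by
          rw [← step2]; exact step1
      _ ≤ 2 ^ ((N:ℝ)-2) * R ^ (-(2*((N:ℝ)-2))) * I := mul_le_mul_of_nonneg_left step3 hcnn
  have hpowR : (R:ℝ) ^ N * R ^ (-(2*((N:ℝ)-2))) = R ^ (-((N:ℝ)-4)) := by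
    rw [← Real.rpow_natCast R N, ← Real.rpow_add hRpos]
    congr 1; ring
  have hpowRr : R ^ (-((N:ℝ)-4)) = r ^ (-((N:ℝ)-4)) * δ ^ ((N:ℝ)-4) := by
    rw [hRdef, Real.div_rpow hr.le hδ.le, Real.rpow_neg hδ.le, div_eq_mul_inv, inv_inv]
  have hJle : J ≤ 2 ^ ((N:ℝ)-2) * I * (r ^ (-((N:ℝ)-4)) * δ ^ ((N:ℝ)-4)) := by
    calc J ≤ ∫ y in (Metric.ball (0 : EuclideanSpace ℝ (Fin N)) R)ᶜ, f y := T1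
      _ = R ^ N * ∫ z in (Metric.ball (0 : EuclideanSpace ℝ (Fin N)) 1)ᶜ, f (R • z) := T2
      _ ≤ R ^ N * (2 ^ ((N:ℝ)-2) * R ^ (-(2*((N:ℝ)-2))) * I) :=
          mul_le_mul_of_nonneg_left T4 hRN.le
      _ = 2 ^ ((N:ℝ)-2) * I * (R ^ N * R ^ (-(2*((N:ℝ)-2)))) := by ring
      _ = 2 ^ ((N:ℝ)-2) * I * (r ^ (-((N:ℝ)-4)) * δ ^ ((N:ℝ)-4)) := by
          rw [hpowR, hpowRr]
  have hpowδ : (δ:ℝ) ^ 2 * δ ^ ((N:ℝ)-4) = δ ^ ((N:ℝ)-2) := by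
    rw [← Real.rpow_natCast δ 2, ← Real.rpow_add hδ]
    congr 1; push_cast; ring
  have habs : |(∫ x in Ω, bubble N δ x ^ 2) - A2 * δ ^ 2 * I| = A2 * δ ^ 2 * J := by
    rw [E3, show A2 * δ ^ 2 * (∫ y in s, f y) - A2 * δ ^ 2 * I
      = -(A2 * δ ^ 2 * J) from by rw [← hsplit]; ring, abs_neg,
      abs_of_nonneg (by positivity : (0:ℝ) ≤ A2 * δ ^ 2 * J)]
  rw [habs]
  calc A2 * δ ^ 2 * J
      ≤ A2 * δ ^ 2 * (2 ^ ((N:ℝ)-2) * I * (r ^ (-((N:ℝ)-4)) * δ ^ ((N:ℝ)-4))) :=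
        mul_le_mul_of_nonneg_left hJle (by positivity)
    _ = K * (δ ^ 2 * δ ^ ((N:ℝ)-4)) := by rw [hKdef]; ring
    _ = K * δ ^ ((N:ℝ)-2) := by rw [hpowδ]
    _ ≤ (1 + K) * δ ^ ((N:ℝ)-2) := by
        apply mul_le_mul_of_nonneg_right (by linarith) (Real.rpow_nonneg hδ.le _)
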